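/- Let R be a unital ring, let M₁ ⊆ M₂ and M₃ ⊆ M₄ be left R-modules such that M₂ and M₄ are projective and M₂/M₁ ≅ M₄/M₃. Then there is an isomorphism α : M₂ ⊕ M₄ → M₂ ⊕ M₄ such that α maps M₁ ⊕ M₄ onto M₂ ⊕ M₃. -/
import Mathlib

universe u

/-- Lower shear `(x, y) ↦ (x, y + h x)` as a linear automorphism of `M × N`. -/
def shearLow {R M N : Type u} [Ring R] [AddCommGroup M] [Module R M]
    [AddCommGroup N] [Module R N] (h : M →ₗ[R] N) : (M × N) ≃ₗ[R] (M × N) where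
  toFun p := (p.1, p.2 + h p.1)
  invFun p := (p.1, p.2 - h p.1)
  map_add' p q := by simp [Prod.ext_iff]; abel
  map_smul' r p := by simp [Prod.ext_iff]
  left_inv p := by simp
  right_inv p := by simp

/-- Upper shear `(x, y) ↦ (x + h y, y)` as a linear automorphism of `M × N`. -/
def shearUp {R M N : Type u} [Ring R] [AddCommGroup M] [Module R M]
    [AddCommGroup N] [Module R N] (h : N →ₗ[R] M) : (M × N) ≃ₗ[R] (M × N) where
  toFun p := (p.1 + h p.2, p.2)
  invFun p := (p.1 - h p.2, p.2)
  map_add' p q := by simp [Prod.ext_iff]; abel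
  map_smul' r p := by simp [Prod.ext_iff]
  left_inv p := by simp
  right_inv p := by simp

/-- strengthened Schanuel lemma. Let `R` be a unital ring, `M₂` and `M₄`
projective left `R`-modules, `N₁ ⊆ M₂` and `N₃ ⊆ M₄` submodules with `M₂/N₁ ≅ M₄/N₃`.
Then there is an automorphism `α` of `M₂ ⊕ M₄` mapping `N₁ ⊕ M₄` onto `M₂ ⊕ N₃`. -/
theorem schanuel_strengthened (R : Type u) [Ring R]
    (M₂ M₄ : Type u) [AddCommGroup M₂] [Module R M₂] [AddCommGroup M₄] [Module R M₄]
    [Module.Projective R M₂] [Module.Projective R M₄]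
    (N₁ : Submodule R M₂) (N₃ : Submodule R M₄)
    (e : (M₂ ⧸ N₁) ≃ₗ[R] (M₄ ⧸ N₃)) :
    ∃ α : (M₂ × M₄) ≃ₗ[R] (M₂ × M₄),
      (N₁.prod (⊤ : Submodule R M₄)).map (α : (M₂ × M₄) →ₗ[R] (M₂ × M₄)) =
        (⊤ : Submodule R M₂).prod N₃ := by
  obtain ⟨f, hf⟩ := Module.projective_lifting_property N₃.mkQ
    (e.toLinearMap ∘ₗ N₁.mkQ) N₃.mkQ_surjective
  obtain ⟨g, hg⟩ := Module.projective_lifting_property N₁.mkQ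
    (e.symm.toLinearMap ∘ₗ N₃.mkQ) N₁.mkQ_surjective
  have hfx : ∀ a, N₃.mkQ (f a) = e (N₁.mkQ a) := fun a => LinearMap.congr_fun hf a
  have hgx : ∀ a, N₁.mkQ (g a) = e.symm (N₃.mkQ a) := fun a => LinearMap.congr_fun hg a
  refine ⟨(shearLow (-f)).trans ((shearUp g).trans (shearLow (-f))), ?_⟩
  ext ⟨x, y⟩
  rw [show ((((shearLow (-f)).trans ((shearUp g).trans (shearLow (-f))))) :
      (M₂ × M₄) →ₗ[R] (M₂ × M₄)) =
      (((shearLow (-f)).trans ((shearUp g).trans (shearLow (-f)))) :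
      (M₂ × M₄) ≃ₗ[R] (M₂ × M₄)).toLinearMap from rfl,
    Submodule.map_equiv_eq_comap_symm]
  simp only [Submodule.mem_comap, LinearEquiv.coe_coe, LinearEquiv.trans_apply,
    Submodule.mem_prod, Submodule.mem_top, and_true, true_and]
  have hsymm : ((shearLow (-f)).trans ((shearUp g).trans (shearLow (-f)))).symm (x, y)
      = (x - g (y + f x), y + f x + f (x - g (y + f x))) := by
    rw [LinearEquiv.symm_apply_eq]
    simp [LinearEquiv.trans_apply, shearLow, shearUp, sub_neg_eq_add,
      add_sub_cancel_right, sub_add_cancel, Prod.ext_iff]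
    constructor <;> abel
  rw [hsymm]
  simp only [Submodule.mem_prod, Submodule.mem_top, and_true]
  rw [← Submodule.Quotient.mk_eq_zero N₁, ← Submodule.Quotient.mk_eq_zero N₃,
    ← Submodule.mkQ_apply, ← Submodule.mkQ_apply]
  rw [map_sub, hgx, map_add, hfx, map_add, LinearEquiv.symm_apply_apply]
  rw [show N₁.mkQ x - (e.symm (N₃.mkQ y) + N₁.mkQ x) = -(e.symm (N₃.mkQ y)) by abel]
  simp [LinearEquiv.map_eq_zero_iff]
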